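/- Let r ≥ 3, t ≥ 3, c ≤ r, and let B(r,t,c) be the t×t tridiagonal matrix with lower diagonal (1,...,1,c,r), upper diagonal (r, r−1,...,r−1, r−c), and constant row sum r. Then the characteristic polynomial of B(r,t,c) equals (up to sign) (x² − r²)(H_{t−2}(x) + (c−1)H_{t−4}(x)). -/

import Mathlib

open Polynomial

/-- The orthogonal polynomials `F_j` with parameter `r`. -/
noncomputable def Fpoly (r : ℝ) : ℕ → Polynomial ℝ
  | 0 => 1
  | 1 => X
  | 2 => X ^ 2 - C r
  | (j + 3) => X * Fpoly r (j + 2) - C (r - 1) * Fpoly r (j + 1)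

/-- `H_j = ∑_{i=0}^{⌊j/2⌋} F_{j-2i}`. -/
noncomputable def Hpoly (r : ℝ) (j : ℕ) : Polynomial ℝ :=
  ∑ i ∈ Finset.range (j / 2 + 1), Fpoly r (j - 2 * i)

/-- `H_j` extended to negative indices `j = -1, -2` by the convention that the recurrence
`H_j = x H_{j-1} - (r-1) H_{j-2}` continues to hold, giving `H_{-1} = 0` and
`H_{-2} = -1/(r-1)`. -/
noncomputable def Hext (r : ℝ) (n : ℤ) : Polynomial ℝ :=
  if n = -1 then 0 else if n = -2 then C (-(1 / (r - 1))) else Hpoly r n.toNat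

/-- The tridiagonal matrix `B(r,t,c)` with lower diagonal `(1,…,1,c,r)`,
upper diagonal `(r, r-1,…,r-1, r-c)` and zero diagonal (constant row sum `r`). -/
def Bmat (r c : ℝ) (t : ℕ) : Matrix (Fin t) (Fin t) ℝ :=
  Matrix.of fun i j =>
    if (j : ℕ) = (i : ℕ) + 1 then
      (if (i : ℕ) = 0 then r else if (i : ℕ) = t - 2 then r - c else r - 1)
    else if (i : ℕ) = (j : ℕ) + 1 then
      (if (j : ℕ) = t - 2 then r else if (j : ℕ) = t - 3 then c else 1)
    else 0

section Tri
variable {R : Type*} [CommRing R]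

noncomputable def tricont (d a b : ℕ → R) : ℕ → R
  | 0 => 1
  | 1 => d 0
  | (n+2) => d 0 * tricont (fun i => d (i+1)) (fun i => a (i+1)) (fun i => b (i+1)) (n+1)
      - a 0 * b 0 * tricont (fun i => d (i+2)) (fun i => a (i+2)) (fun i => b (i+2)) n

def Tmat (d a b : ℕ → R) (n : ℕ) : Matrix (Fin n) (Fin n) R :=
  Matrix.of fun i j => if (i:ℕ) = j then d i else if (j:ℕ) = (i:ℕ) + 1 then a i
    else if (i:ℕ) = (j:ℕ) + 1 then b j else 0

theorem tricont_zero (d a b : ℕ → R) : tricont d a b 0 = 1 := by rw [tricont]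

theorem tricont_one (d a b : ℕ → R) : tricont d a b 1 = d 0 := by rw [tricont]

theorem tricont_back : ∀ (n : ℕ) (d a b : ℕ → R),
    tricont d a b (n+2) = d (n+1) * tricont d a b (n+1) - a n * b n * tricont d a b n := by
  intro n
  induction n using Nat.twoStepInduction with
  | zero =>
    intro d a b
    simp [tricont]
    ring
  | one =>
    intro d a b
    simp [tricont]
    ring
  | more n ih ih1 =>
    intro d a b
    have e1 := ih1 (fun i => d (i+1)) (fun i => a (i+1)) (fun i => b (i+1))
    have e2 := ih (fun i => d (i+2)) (fun i => a (i+2)) (fun i => b (i+2))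
    have u4 : tricont d a b (n+2+2)
        = d 0 * tricont (fun i => d (i+1)) (fun i => a (i+1)) (fun i => b (i+1)) (n+3)
        - a 0 * b 0 * tricont (fun i => d (i+2)) (fun i => a (i+2)) (fun i => b (i+2)) (n+2) := by
      rw [tricont]
    have u3 : tricont d a b (n+1+2)
        = d 0 * tricont (fun i => d (i+1)) (fun i => a (i+1)) (fun i => b (i+1)) (n+2)
        - a 0 * b 0 * tricont (fun i => d (i+2)) (fun i => a (i+2)) (fun i => b (i+2)) (n+1) := by
      rw [tricont]
    have u2 : tricont d a b (n+2)
        = d 0 * tricont (fun i => d (i+1)) (fun i => a (i+1)) (fun i => b (i+1)) (n+1)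
        - a 0 * b 0 * tricont (fun i => d (i+2)) (fun i => a (i+2)) (fun i => b (i+2)) n := by
      rw [tricont]
    rw [show n+2+2 = n+4 from rfl] at u4
    rw [show n+1+2 = n+3 from rfl] at u3
    rw [u4, e1, e2, u3, u2]
    ring

theorem det_Tmat : ∀ (n : ℕ) (d a b : ℕ → R), (Tmat d a b n).det = tricont d a b n := by
  intro n
  induction n using Nat.twoStepInduction with
  | zero => intro d a b; simp [tricont_zero, Matrix.det_fin_zero]
  | one => intro d a b; simp [tricont_one, Matrix.det_fin_one, Tmat]
  | more n ih ih1 =>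
    intro d a b
    rw [Matrix.det_succ_row_zero, Fin.sum_univ_succ, Fin.sum_univ_succ]
    have hz : ∀ j : Fin n, (Tmat d a b (n+2)) 0 (Fin.succ (Fin.succ j)) = 0 := by
      intro j
      simp only [Tmat, Matrix.of_apply, Fin.val_succ, Fin.val_zero]
      norm_num
    simp only [hz, mul_zero, zero_mul, Finset.sum_const_zero, add_zero]
    have hs1 : (Tmat d a b (n+2)).submatrix Fin.succ ((0 : Fin (n+2)).succAbove)
        = Tmat (fun i => d (i+1)) (fun i => a (i+1)) (fun i => b (i+1)) (n+1) := by
      rw [Fin.succAbove_zero]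
      ext i j
      simp only [Matrix.submatrix_apply, Tmat, Matrix.of_apply, Fin.val_succ,
        Nat.add_right_cancel_iff]
    have hcol : ∀ j : Fin (n+1), (((Fin.succ 0 : Fin (n+2)).succAbove j) : ℕ)
        = if (j:ℕ) = 0 then 0 else (j:ℕ)+1 := by
      intro j
      rcases Nat.eq_zero_or_pos (j:ℕ) with h | h
      · have : j = 0 := by exact Fin.ext h
        subst this
        rw [Fin.succAbove_of_castSucc_lt]
        · simp
        · simp [Fin.lt_def]
      · rw [Fin.succAbove_of_le_castSucc]
        · simp only [Fin.val_succ]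
          rw [if_neg (by omega)]
        · simp [Fin.le_def]; omega
    set M := (Tmat d a b (n+2)).submatrix Fin.succ ((Fin.succ 0 : Fin (n+2)).succAbove) with hM
    have hMdet : M.det = b 0 * tricont (fun i => d (i+2)) (fun i => a (i+2)) (fun i => b (i+2)) n := by
      rw [Matrix.det_succ_column_zero, Fin.sum_univ_succ]
      have hz2 : ∀ i : Fin n, M (Fin.succ i) 0 = 0 := by
        intro i
        simp only [hM, Matrix.submatrix_apply, Tmat, Matrix.of_apply, Fin.val_succ, hcol,
          Fin.val_zero]
        norm_num
      simp only [hz2, mul_zero, zero_mul, Finset.sum_const_zero, add_zero]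
      have hM00 : M 0 0 = b 0 := by
        simp only [hM, Matrix.submatrix_apply, Tmat, Matrix.of_apply, Fin.val_succ, hcol,
          Fin.val_zero]
        norm_num
      have hsub : M.submatrix ((0 : Fin (n+1)).succAbove) Fin.succ
          = Tmat (fun i => d (i+2)) (fun i => a (i+2)) (fun i => b (i+2)) n := by
        rw [Fin.succAbove_zero]
        ext i j
        simp only [hM, Matrix.submatrix_apply, Tmat, Matrix.of_apply, Fin.val_succ, hcol,
          Nat.add_right_cancel_iff]
        norm_num
      rw [hM00, hsub, ih]
      simp
    have h00 : (Tmat d a b (n+2)) 0 0 = d 0 := by simp [Tmat]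
    have h01 : (Tmat d a b (n+2)) 0 (Fin.succ 0) = a 0 := by simp [Tmat]
    rw [hs1, hMdet, h00, h01, ih1]
    have u2 : tricont d a b (n+2)
        = d 0 * tricont (fun i => d (i+1)) (fun i => a (i+1)) (fun i => b (i+1)) (n+1)
        - a 0 * b 0 * tricont (fun i => d (i+2)) (fun i => a (i+2)) (fun i => b (i+2)) n := by
      rw [tricont]
    rw [u2]
    simp
    ring

end Tri

theorem Hsplit (r : ℝ) (j : ℕ) : Hpoly r (j+2) = Fpoly r (j+2) + Hpoly r j := by
  unfold Hpoly
  have h2 : (j+2)/2 + 1 = (j/2 + 1) + 1 := by omega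
  rw [h2, Finset.sum_range_succ' (fun i => Fpoly r (j + 2 - 2 * i)) (j/2+1)]
  rw [add_comm]
  congr 1
  apply Finset.sum_congr rfl
  intro i hi
  simp only [Finset.mem_range] at hi
  congr 1
  omega

theorem Hpoly_zero (r : ℝ) : Hpoly r 0 = 1 := by simp [Hpoly, Fpoly]
theorem Hpoly_one (r : ℝ) : Hpoly r 1 = X := by simp [Hpoly, Fpoly]

theorem keyH (r : ℝ) : ∀ j, (X^2 - C (r^2)) * Hpoly r j
    = C r * Fpoly r (j+2) - C (r-1) * X * Fpoly r (j+1) := by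
  intro j
  induction j using Nat.twoStepInduction with
  | zero =>
    rw [Hpoly_zero]
    show _ = C r * Fpoly r 2 - C (r-1) * X * Fpoly r 1
    simp only [Fpoly, map_sub, map_one, map_pow, map_mul]
    ring
  | one =>
    rw [Hpoly_one]
    show _ = C r * Fpoly r 3 - C (r-1) * X * Fpoly r 2
    simp only [Fpoly, map_sub, map_one, map_pow, map_mul]
    ring
  | more j ih ih1 =>
    rw [Hsplit, mul_add, ih]
    show _ = C r * Fpoly r (j+4) - C (r-1) * X * Fpoly r (j+3)
    have h4 : Fpoly r (j+4) = X * Fpoly r (j+3) - C (r-1) * Fpoly r (j+2) := rfl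
    have h3 : Fpoly r (j+3) = X * Fpoly r (j+2) - C (r-1) * Fpoly r (j+1) := rfl
    rw [h4, h3]
    simp only [map_sub, map_one, map_pow, map_mul]
    ring

theorem Hext_natCast (r : ℝ) (k : ℕ) : Hext r ((k : ℤ)) = Hpoly r k := by
  unfold Hext
  rw [if_neg (by omega), if_neg (by omega)]
  simp

theorem charpoly_Bmat (r c : ℝ) (hr : 3 ≤ r) (hc : 0 < c) (hcr : c ≤ r)
    (t : ℕ) (ht : 3 ≤ t) :
    (Bmat r c t).charpoly =
      (X ^ 2 - C (r ^ 2)) * (Hext r ((t : ℤ) - 2) + C (c - 1) * Hext r ((t : ℤ) - 4)) := by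
  classical
  set aa : ℕ → Polynomial ℝ :=
    fun i => -C (if i = 0 then r else if i = t - 2 then r - c else r - 1) with haa
  set bb : ℕ → Polynomial ℝ :=
    fun j => -C (if j = t - 2 then r else if j = t - 3 then c else 1) with hbb
  set dd : ℕ → Polynomial ℝ := fun _ => X with hdd
  have hchar : Matrix.charmatrix (Bmat r c t) = Tmat dd aa bb t := by
    apply Matrix.ext
    intro i j
    by_cases hij : i = j
    · subst hij
      rw [Matrix.charmatrix_apply_eq]
      have hB : Bmat r c t i i = 0 := by
        simp only [Bmat, Matrix.of_apply]
        rw [if_neg (by omega), if_neg (by omega)]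
      rw [hB, map_zero, sub_zero]
      simp [Tmat, hdd]
    · rw [Matrix.charmatrix_apply_ne _ _ _ hij]
      have hvij : (i : ℕ) ≠ (j : ℕ) := fun h => hij (Fin.ext h)
      simp only [Tmat, Matrix.of_apply, if_neg hvij, Bmat, haa, hbb]
      split_ifs with h1 h2 <;> simp
  have hcp : (Bmat r c t).charpoly = tricont dd aa bb t := by
    rw [Matrix.charpoly, hchar, det_Tmat]
  -- values of tricont up to t-2 are Fpoly
  have hDF : ∀ n, n ≤ t - 2 → tricont dd aa bb n = Fpoly r n := by
    intro n
    induction n using Nat.twoStepInduction with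
    | zero => intro _; rw [tricont_zero]; rfl
    | one => intro _; rw [tricont_one]; rfl
    | more n ih ih1 =>
      intro hn
      rw [tricont_back, ih1 (by omega), ih (by omega)]
      have hd : dd (n+1) = X := rfl
      rcases Nat.eq_zero_or_pos n with h0 | h0
      · subst h0
        have ht4 : 4 ≤ t := by omega
        have ha0 : aa 0 = -C r := by rw [haa]; simp
        have hb0 : bb 0 = -C 1 := by
          rw [hbb]; simp only; rw [if_neg (by omega), if_neg (by omega)]
        rw [hd, ha0, hb0]
        show _ = Fpoly r 2
        simp only [Fpoly, map_one]
        ring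
      · obtain ⟨k, rfl⟩ := Nat.exists_eq_add_of_le h0
        have ha : aa (1+k) = -C (r-1) := by
          rw [haa]; simp only; rw [if_neg (by omega), if_neg (by omega)]
        have hb : bb (1+k) = -C 1 := by
          rw [hbb]; simp only; rw [if_neg (by omega), if_neg (by omega)]
        rw [hd, ha, hb]
        have hF : Fpoly r (1+k+2) = X * Fpoly r (1+k+1) - C (r-1) * Fpoly r (1+k) := by
          rw [show 1+k+2 = k+3 from by omega, show 1+k+1 = k+2 from by omega,
            show 1+k = k+1 from by omega]
          rfl
        rw [hF]
        simp only [map_one]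
        ring
  rcases Nat.lt_or_ge t 4 with h3 | h4
  · -- t = 3
    have ht3 : t = 3 := by omega
    subst ht3
    have ha0 : aa 0 = -C r := by rw [haa]; simp
    have hb0 : bb 0 = -C c := by rw [hbb]; simp
    have ha1 : aa 1 = -C (r - c) := by rw [haa]; simp
    have hb1 : bb 1 = -C r := by rw [hbb]; simp
    have e1 : tricont dd aa bb 3 = dd 2 * tricont dd aa bb 2 - aa 1 * bb 1 * tricont dd aa bb 1 :=
      tricont_back 1 dd aa bb
    have e0 : tricont dd aa bb 2 = dd 1 * tricont dd aa bb 1 - aa 0 * bb 0 * tricont dd aa bb 0 :=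
      tricont_back 0 dd aa bb
    rw [hcp, e1, e0, tricont_zero, tricont_one, ha0, hb0, ha1, hb1]
    have h1 : ((3:ℕ) : ℤ) - 2 = ((1:ℕ) : ℤ) := by norm_num
    have h2 : ((3:ℕ) : ℤ) - 4 = -1 := by norm_num
    rw [h1, h2, Hext_natCast, Hpoly_one]
    have hHm1 : Hext r (-1) = 0 := by unfold Hext; rw [if_pos rfl]
    rw [hHm1]
    simp only [map_sub, map_pow]
    ring
  · -- t ≥ 4
    obtain ⟨m, rfl⟩ : ∃ m, t = m + 4 := ⟨t - 4, by omega⟩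
    have e2 : tricont dd aa bb (m+4)
        = dd (m+3) * tricont dd aa bb (m+3) - aa (m+2) * bb (m+2) * tricont dd aa bb (m+2) :=
      tricont_back (m+2) dd aa bb
    have e1 : tricont dd aa bb (m+3)
        = dd (m+2) * tricont dd aa bb (m+2) - aa (m+1) * bb (m+1) * tricont dd aa bb (m+1) :=
      tricont_back (m+1) dd aa bb
    have hF2 := hDF (m+2) (by omega)
    have hF1 := hDF (m+1) (by omega)
    have ha2 : aa (m+2) = -C (r - c) := by
      rw [haa]; simp only; rw [if_neg (by omega), if_pos (by omega)]
    have hb2 : bb (m+2) = -C r := by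
      rw [hbb]; simp only; rw [if_pos (by omega)]
    have ha1 : aa (m+1) = -C (r-1) := by
      rw [haa]; simp only; rw [if_neg (by omega), if_neg (by omega)]
    have hb1 : bb (m+1) = -C c := by
      rw [hbb]; simp only; rw [if_neg (by omega), if_pos (by omega)]
    have hhe2 : Hext r (((m+4:ℕ) : ℤ) - 2) = Hpoly r (m+2) := by
      rw [show (((m+4:ℕ) : ℤ) - 2) = ((m+2 : ℕ) : ℤ) from by push_cast; ring, Hext_natCast]
    have hhe4 : Hext r (((m+4:ℕ) : ℤ) - 4) = Hpoly r m := by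
      rw [show (((m+4:ℕ) : ℤ) - 4) = ((m : ℕ) : ℤ) from by push_cast; ring, Hext_natCast]
    rw [hcp, e2, e1, hF2, hF1, ha2, hb2, ha1, hb1, hhe2, hhe4, Hsplit]
    have hk := keyH r m
    simp only [map_sub, map_one, map_pow, map_mul] at hk ⊢
    linear_combination (-(C c) : Polynomial ℝ) * hk
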